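/- arXiv:2506.20534 — 2 statements merged into one kernel-verified Lean document; each statement's English description precedes it below -/
import Mathlib

section
/- Let G ∈ ℝ^{M×N}, Y ∈ ℝ^{M×T}, σ² > 0, T > 0, ρ ≥ 0, and v ∈ ℝ^N with v_n + ρ > 0 for all n. Then the infimum over X ∈ ℝ^{N×T} and γ ∈ ℝ^N with γ_n > 0 of (1/(Tσ²))‖Y − GX‖² + (1/T)∑_{n,t} X[n,t]²/γ_n + ∑_n (v_n + ρ)γ_n equals the infimum over X of (1/(Tσ²))‖Y − GX‖² + 2∑_n √((ρ + v_n)/T)·‖X[n,:]‖₂. -/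
open Real Finset Matrix

private lemma sqrt_add_le' (x y : ℝ) (hx : 0 ≤ x) (hy : 0 ≤ y) :
    Real.sqrt (x + y) ≤ Real.sqrt x + Real.sqrt y := by
  have h : x + y ≤ (Real.sqrt x + Real.sqrt y) ^ 2 := by
    have hxy : 0 ≤ Real.sqrt x * Real.sqrt y :=
      mul_nonneg (Real.sqrt_nonneg _) (Real.sqrt_nonneg _)
    nlinarith [Real.sq_sqrt hx, Real.sq_sqrt hy]
  calc Real.sqrt (x + y) ≤ Real.sqrt ((Real.sqrt x + Real.sqrt y) ^ 2) :=
        Real.sqrt_le_sqrt h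
    _ = _ := Real.sqrt_sq (by positivity)

private lemma amgm' {a w γ : ℝ} (ha : 0 ≤ a) (hw : 0 < w) (hγ : 0 < γ) :
    2 * Real.sqrt (w * a) ≤ a / γ + w * γ := by
  rw [Real.sqrt_mul hw.le]
  have h1 : Real.sqrt a ^ 2 = a := Real.sq_sqrt ha
  have h2 : Real.sqrt w ^ 2 = w := Real.sq_sqrt hw.le
  have key : 0 ≤ (Real.sqrt a - Real.sqrt w * γ) ^ 2 := sq_nonneg _
  have hmul : 2 * (Real.sqrt w * Real.sqrt a) * γ ≤ a + w * γ ^ 2 := by nlinarith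
  have := (div_le_div_iff_of_pos_right hγ).mpr hmul
  calc 2 * (Real.sqrt w * Real.sqrt a)
      = 2 * (Real.sqrt w * Real.sqrt a) * γ / γ := by field_simp
    _ ≤ (a + w * γ ^ 2) / γ := this
    _ = a / γ + w * γ := by field_simp

private lemma upper' {a w δ : ℝ} (ha : 0 ≤ a) (hw : 0 < w) (hδ : 0 < δ) :
    a / Real.sqrt ((a + δ) / w) + w * Real.sqrt ((a + δ) / w)
      ≤ 2 * Real.sqrt (w * a) + 2 * Real.sqrt (w * δ) := by
  have had : 0 < a + δ := by linarith
  have hsw : 0 < Real.sqrt w := Real.sqrt_pos.mpr hw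
  have hsad : 0 < Real.sqrt (a + δ) := Real.sqrt_pos.mpr had
  rw [Real.sqrt_div had.le]
  have h1 : a / (Real.sqrt (a + δ) / Real.sqrt w) ≤ Real.sqrt w * Real.sqrt (a + δ) := by
    rw [div_div_eq_mul_div]
    rw [div_le_iff₀ hsad]
    have : Real.sqrt w * Real.sqrt (a + δ) * Real.sqrt (a + δ) = Real.sqrt w * (a + δ) := by
      rw [mul_assoc, Real.mul_self_sqrt had.le]
    rw [this]
    have : a ≤ a + δ := by linarith
    nlinarith
  have h2 : w * (Real.sqrt (a + δ) / Real.sqrt w) = Real.sqrt w * Real.sqrt (a + δ) := by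
    rw [mul_div_assoc']
    rw [mul_comm w]
    rw [mul_div_assoc, Real.div_sqrt]
    ring
  have h3 : Real.sqrt (a + δ) ≤ Real.sqrt a + Real.sqrt δ := sqrt_add_le' a δ ha hδ.le
  have := add_le_add h1 (le_of_eq h2)
  calc a / (Real.sqrt (a + δ) / Real.sqrt w) + w * (Real.sqrt (a + δ) / Real.sqrt w)
      ≤ 2 * (Real.sqrt w * Real.sqrt (a + δ)) := by linarith
    _ ≤ 2 * (Real.sqrt w * (Real.sqrt a + Real.sqrt δ)) := by nlinarith
    _ = 2 * Real.sqrt (w * a) + 2 * Real.sqrt (w * δ) := by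
        rw [Real.sqrt_mul hw.le, Real.sqrt_mul hw.le]; ring

theorem champagne_sparse_coding_equiv
    (M N T : ℕ) (hT : 0 < T)
    (G : Matrix (Fin M) (Fin N) ℝ) (Y : Matrix (Fin M) (Fin T) ℝ)
    (σ2 : ℝ) (hσ : 0 < σ2) (ρ : ℝ) (hρ : 0 ≤ ρ)
    (v : Fin N → ℝ) (hv : ∀ n, 0 < v n + ρ) :
    sInf {c : ℝ | ∃ (X : Matrix (Fin N) (Fin T) ℝ) (γ : Fin N → ℝ),
        (∀ n, 0 < γ n) ∧
        c = (1 / (T * σ2)) * (∑ m, ∑ t, (Y m t - (G * X) m t) ^ 2)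
            + (1 / T) * (∑ n, ∑ t, X n t ^ 2 / γ n)
            + ∑ n, (v n + ρ) * γ n}
    = sInf {c : ℝ | ∃ X : Matrix (Fin N) (Fin T) ℝ,
        c = (1 / (T * σ2)) * (∑ m, ∑ t, (Y m t - (G * X) m t) ^ 2)
            + 2 * ∑ n, Real.sqrt ((ρ + v n) / T) * Real.sqrt (∑ t, X n t ^ 2)} := by
  have hT' : (0:ℝ) < (T:ℝ) := by exact_mod_cast hT
  set Q : Matrix (Fin N) (Fin T) ℝ → ℝ :=
    fun X => (1 / (T * σ2)) * (∑ m, ∑ t, (Y m t - (G * X) m t) ^ 2) with hQ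
  set S : Matrix (Fin N) (Fin T) ℝ → Fin N → ℝ :=
    fun X n => ∑ t, X n t ^ 2 with hS
  have hQ0 : ∀ X, 0 ≤ Q X := by
    intro X
    apply mul_nonneg (by positivity)
    apply Finset.sum_nonneg; intro m _
    apply Finset.sum_nonneg; intro t _; positivity
  have hS0 : ∀ X n, 0 ≤ S X n := by
    intro X n; apply Finset.sum_nonneg; intro t _; positivity
  set A : Set ℝ := {c : ℝ | ∃ (X : Matrix (Fin N) (Fin T) ℝ) (γ : Fin N → ℝ),
        (∀ n, 0 < γ n) ∧
        c = (1 / (T * σ2)) * (∑ m, ∑ t, (Y m t - (G * X) m t) ^ 2)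
            + (1 / T) * (∑ n, ∑ t, X n t ^ 2 / γ n)
            + ∑ n, (v n + ρ) * γ n} with hA
  set B : Set ℝ := {c : ℝ | ∃ X : Matrix (Fin N) (Fin T) ℝ,
        c = (1 / (T * σ2)) * (∑ m, ∑ t, (Y m t - (G * X) m t) ^ 2)
            + 2 * ∑ n, Real.sqrt ((ρ + v n) / T) * Real.sqrt (∑ t, X n t ^ 2)} with hB
  -- rewrite the A-cost as Q X + ∑ per-row term
  have hAcost : ∀ (X : Matrix (Fin N) (Fin T) ℝ) (γ : Fin N → ℝ), (∀ n, 0 < γ n) →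
      (1 / (T * σ2)) * (∑ m, ∑ t, (Y m t - (G * X) m t) ^ 2)
        + (1 / T) * (∑ n, ∑ t, X n t ^ 2 / γ n)
        + ∑ n, (v n + ρ) * γ n
      = Q X + ∑ n, ((S X n / T) / γ n + (v n + ρ) * γ n) := by
    intro X γ hγ
    have h1 : ∀ n : Fin N, ∑ t, X n t ^ 2 / γ n = S X n / γ n := by
      intro n; rw [← Finset.sum_div]
    simp only [hQ]
    rw [add_assoc]
    congr 1
    rw [Finset.sum_congr rfl (fun n _ => h1 n), Finset.mul_sum, ← Finset.sum_add_distrib]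
    apply Finset.sum_congr rfl
    intro n _
    ring
  -- rewrite the B-cost
  have hBcost : ∀ X : Matrix (Fin N) (Fin T) ℝ,
      (1 / (T * σ2)) * (∑ m, ∑ t, (Y m t - (G * X) m t) ^ 2)
        + 2 * ∑ n, Real.sqrt ((ρ + v n) / T) * Real.sqrt (∑ t, X n t ^ 2)
      = Q X + ∑ n, 2 * Real.sqrt ((v n + ρ) * (S X n / T)) := by
    intro X
    congr 1
    rw [Finset.mul_sum]
    apply Finset.sum_congr rfl
    intro n _
    have hvn : 0 ≤ (ρ + v n) / T := div_nonneg (by linarith [hv n]) hT'.le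
    rw [← Real.sqrt_mul hvn]
    congr 2
    ring
  -- B is bounded below by 0
  have hBbdd : BddBelow B := by
    refine ⟨0, fun c hc => ?_⟩
    obtain ⟨X, rfl⟩ := hc
    have h2 : 0 ≤ 2 * ∑ n, Real.sqrt ((ρ + v n) / T) * Real.sqrt (∑ t, X n t ^ 2) := by
      apply mul_nonneg (by norm_num)
      apply Finset.sum_nonneg; intro n _
      exact mul_nonneg (Real.sqrt_nonneg _) (Real.sqrt_nonneg _)
    have := hQ0 X
    simp only [hQ] at this
    linarith
  -- A is bounded below by 0
  have hAbdd : BddBelow A := by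
    refine ⟨0, fun c hc => ?_⟩
    obtain ⟨X, γ, hγ, rfl⟩ := hc
    have h1 := hQ0 X
    simp only [hQ] at h1
    have h2 : 0 ≤ (1 / (T:ℝ)) * (∑ n, ∑ t, X n t ^ 2 / γ n) := by
      apply mul_nonneg (by positivity)
      apply Finset.sum_nonneg; intro n _
      apply Finset.sum_nonneg; intro t _
      exact div_nonneg (by positivity) (hγ n).le
    have h3 : 0 ≤ ∑ n, (v n + ρ) * γ n := by
      apply Finset.sum_nonneg; intro n _
      exact mul_nonneg (hv n).le (hγ n).le
    linarith
  have hAne : A.Nonempty := ⟨_, 0, fun _ => 1, fun _ => one_pos, rfl⟩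
  have hBne : B.Nonempty := ⟨_, 0, rfl⟩
  apply le_antisymm
  · -- sInf A ≤ sInf B
    apply le_csInf hBne
    rintro b ⟨X, rfl⟩
    apply le_of_forall_pos_le_add
    intro ε hε
    set K : ℝ := ∑ n : Fin N, Real.sqrt (v n + ρ) with hK
    have hK0 : 0 ≤ K := Finset.sum_nonneg fun n _ => Real.sqrt_nonneg _
    set δ : ℝ := (ε / (2 * (K + 1))) ^ 2 with hδdef
    have hδ : 0 < δ := by positivity
    have hsδ : Real.sqrt δ = ε / (2 * (K + 1)) := Real.sqrt_sq (by positivity)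
    set γ : Fin N → ℝ := fun n => Real.sqrt ((S X n / T + δ) / (v n + ρ)) with hγdef
    have hγpos : ∀ n, 0 < γ n := by
      intro n
      have h1 := hS0 X n
      have h2 := hv n
      apply Real.sqrt_pos.mpr
      apply div_pos _ h2
      have h3 : 0 ≤ S X n / T := by positivity
      linarith
    have hmem : (1 / (T * σ2)) * (∑ m, ∑ t, (Y m t - (G * X) m t) ^ 2)
        + (1 / T) * (∑ n, ∑ t, X n t ^ 2 / γ n)
        + ∑ n, (v n + ρ) * γ n ∈ A := ⟨X, γ, hγpos, rfl⟩
    refine le_trans (csInf_le hAbdd hmem) ?_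
    rw [hAcost X γ hγpos]
    have key : ∀ n : Fin N, (S X n / T) / γ n + (v n + ρ) * γ n
        ≤ 2 * Real.sqrt ((v n + ρ) * (S X n / T)) + 2 * Real.sqrt ((v n + ρ) * δ) := by
      intro n
      exact upper' (by have := hS0 X n; positivity) (hv n) hδ
    have hsum : ∑ n, ((S X n / T) / γ n + (v n + ρ) * γ n)
        ≤ ∑ n, 2 * Real.sqrt ((v n + ρ) * (S X n / T)) + 2 * Real.sqrt δ * K := by
      calc ∑ n, ((S X n / T) / γ n + (v n + ρ) * γ n)
          ≤ ∑ n, (2 * Real.sqrt ((v n + ρ) * (S X n / T)) + 2 * Real.sqrt ((v n + ρ) * δ)) :=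
            Finset.sum_le_sum fun n _ => key n
        _ = ∑ n, 2 * Real.sqrt ((v n + ρ) * (S X n / T)) + 2 * Real.sqrt δ * K := by
            rw [Finset.sum_add_distrib]
            congr 1
            rw [hK, Finset.mul_sum]
            apply Finset.sum_congr rfl
            intro n _
            rw [Real.sqrt_mul (hv n).le]
            ring
    have hδbound : 2 * Real.sqrt δ * K ≤ ε := by
      rw [hsδ]
      have h1 : 2 * (ε / (2 * (K + 1))) * (K + 1) = ε := by field_simp
      nlinarith [hε.le]
    rw [hBcost X]
    linarith [hsum, hδbound]
  · -- sInf B ≤ sInf A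
    apply le_csInf hAne
    rintro a ⟨X, γ, hγ, rfl⟩
    have hmem : (1 / (T * σ2)) * (∑ m, ∑ t, (Y m t - (G * X) m t) ^ 2)
        + 2 * ∑ n, Real.sqrt ((ρ + v n) / T) * Real.sqrt (∑ t, X n t ^ 2) ∈ B := ⟨X, rfl⟩
    refine le_trans (csInf_le hBbdd hmem) ?_
    rw [hBcost X, hAcost X γ hγ]
    have : ∑ n, 2 * Real.sqrt ((v n + ρ) * (S X n / T))
        ≤ ∑ n, ((S X n / T) / γ n + (v n + ρ) * γ n) := by
      apply Finset.sum_le_sum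
      intro n _
      exact amgm' (by have := hS0 X n; positivity) (hv n) (hγ n)
    linarith
end

section
/- Let G ∈ ℝ^{M×N}, Y ∈ ℝ^{M×T}, σ² > 0, ρ ≥ 0 with ‖G[:,n]‖² + ρ > 0 for all n. Then the infimum over X ∈ ℝ^{N×T} and γ > 0 of (1/(Tσ²))‖Y − GX‖² + (1/T)∑_{n,t} X[n,t]²/γ_n + ∑_n (‖G[:,n]‖² + ρ)γ_n, after multiplying by Tσ²/2, equals the infimum over X of (1/2)‖Y − GX‖² + σ²√T·∑_n √(‖G[:,n]‖² + ρ)·‖X[n,:]‖₂. -/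
open Matrix Finset Real

private lemma amgm_core {w r γ Tr : ℝ} (hw : 0 < w) (hr : 0 ≤ r) (hγ : 0 < γ)
    (hT : 0 < Tr) :
    2 * (Real.sqrt Tr * Real.sqrt w * Real.sqrt r) ≤ r / γ + Tr * w * γ := by
  have h := two_mul_le_add_sq (Real.sqrt (r / γ)) (Real.sqrt (Tr * w * γ))
  have h1 : Real.sqrt (r / γ) ^ 2 = r / γ := Real.sq_sqrt (by positivity)
  have h2 : Real.sqrt (Tr * w * γ) ^ 2 = Tr * w * γ := Real.sq_sqrt (by positivity)
  have h3 : Real.sqrt (r / γ) * Real.sqrt (Tr * w * γ)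
      = Real.sqrt Tr * Real.sqrt w * Real.sqrt r := by
    rw [← Real.sqrt_mul (by positivity), ← Real.sqrt_mul (by positivity),
      ← Real.sqrt_mul (by positivity)]
    congr 1
    field_simp
  rw [h1, h2] at h
  rw [← h3]
  linarith

private lemma ub_core {w r Tr δ : ℝ} (hw : 0 < w) (hr : 0 ≤ r) (hT : 0 < Tr) (hδ : 0 < δ) :
    r / (Real.sqrt (r / (Tr * w)) + δ) + Tr * w * (Real.sqrt (r / (Tr * w)) + δ)
      ≤ 2 * (Real.sqrt Tr * Real.sqrt w * Real.sqrt r) + Tr * w * δ := by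
  have hTw : 0 < Tr * w := by positivity
  have hγpos : 0 < Real.sqrt (r / (Tr * w)) + δ := by positivity
  have hs : Real.sqrt Tr * Real.sqrt w * Real.sqrt r = Real.sqrt (Tr * w * r) := by
    rw [Real.sqrt_mul (by positivity), Real.sqrt_mul (by positivity)]
  have hsnn : 0 ≤ Real.sqrt (Tr * w * r) := Real.sqrt_nonneg _
  have key : Real.sqrt (Tr * w * r) * Real.sqrt (r / (Tr * w)) = r := by
    rw [← Real.sqrt_mul (by positivity)]
    rw [show Tr * w * r * (r / (Tr * w)) = r ^ 2 by field_simp]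
    exact Real.sqrt_sq hr
  have key2 : Tr * w * Real.sqrt (r / (Tr * w)) = Real.sqrt (Tr * w * r) := by
    nth_rewrite 1 [show Tr * w = Real.sqrt ((Tr * w) ^ 2) from (Real.sqrt_sq hTw.le).symm]
    rw [← Real.sqrt_mul (by positivity)]
    congr 1
    field_simp
  have hb1 : r / (Real.sqrt (r / (Tr * w)) + δ) ≤ Real.sqrt (Tr * w * r) := by
    rw [div_le_iff₀ hγpos, mul_add, key]
    nlinarith
  rw [hs]
  have hb2 : Tr * w * (Real.sqrt (r / (Tr * w)) + δ)
      = Real.sqrt (Tr * w * r) + Tr * w * δ := by rw [mul_add, key2]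
  linarith

theorem low_snr_sparse_coding_equiv
    (M N T : ℕ) (hT : 0 < T)
    (G : Matrix (Fin M) (Fin N) ℝ) (Y : Matrix (Fin M) (Fin T) ℝ)
    (σ2 : ℝ) (hσ : 0 < σ2) (ρ : ℝ) (hρ : 0 ≤ ρ)
    (hG : ∀ n, 0 < (∑ m, G m n ^ 2) + ρ) :
    (T * σ2 / 2) *
      sInf {c : ℝ | ∃ (X : Matrix (Fin N) (Fin T) ℝ) (γ : Fin N → ℝ),
        (∀ n, 0 < γ n) ∧
        c = (1 / (T * σ2)) * (∑ m, ∑ t, (Y m t - (G * X) m t) ^ 2)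
            + (1 / T) * (∑ n, ∑ t, X n t ^ 2 / γ n)
            + ∑ n, ((∑ m, G m n ^ 2) + ρ) * γ n}
    = sInf {c : ℝ | ∃ X : Matrix (Fin N) (Fin T) ℝ,
        c = (1 / 2) * (∑ m, ∑ t, (Y m t - (G * X) m t) ^ 2)
            + σ2 * Real.sqrt T *
              ∑ n, Real.sqrt ((∑ m, G m n ^ 2) + ρ) * Real.sqrt (∑ t, X n t ^ 2)} := by
  have hT0 : (0 : ℝ) < (T : ℝ) := by exact_mod_cast hT
  have hTne : (T : ℝ) ≠ 0 := ne_of_gt hT0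
  have hσne : σ2 ≠ 0 := ne_of_gt hσ
  set a : ℝ := (T : ℝ) * σ2 / 2 with ha_def
  have ha : 0 < a := by positivity
  set S1 : Set ℝ := {c : ℝ | ∃ (X : Matrix (Fin N) (Fin T) ℝ) (γ : Fin N → ℝ),
        (∀ n, 0 < γ n) ∧
        c = (1 / (T * σ2)) * (∑ m, ∑ t, (Y m t - (G * X) m t) ^ 2)
            + (1 / T) * (∑ n, ∑ t, X n t ^ 2 / γ n)
            + ∑ n, ((∑ m, G m n ^ 2) + ρ) * γ n} with hS1_def
  set S2 : Set ℝ := {c : ℝ | ∃ X : Matrix (Fin N) (Fin T) ℝ,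
        c = (1 / 2) * (∑ m, ∑ t, (Y m t - (G * X) m t) ^ 2)
            + σ2 * Real.sqrt T *
              ∑ n, Real.sqrt ((∑ m, G m n ^ 2) + ρ) * Real.sqrt (∑ t, X n t ^ 2)} with hS2_def
  have hS1ne : S1.Nonempty := ⟨_, 0, fun _ => 1, fun _ => one_pos, rfl⟩
  have hS2ne : S2.Nonempty := ⟨_, 0, rfl⟩
  have hS1bdd : BddBelow S1 := by
    refine ⟨0, ?_⟩
    rintro c ⟨X, γ, hγ, rfl⟩
    have h1 : 0 ≤ (1 / (T * σ2) : ℝ) * (∑ m, ∑ t, (Y m t - (G * X) m t) ^ 2) := by positivity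
    have h2 : 0 ≤ (1 / T : ℝ) * (∑ n, ∑ t, X n t ^ 2 / γ n) := by
      apply mul_nonneg (by positivity)
      apply Finset.sum_nonneg; intro n _
      apply Finset.sum_nonneg; intro t _
      exact div_nonneg (by positivity) (hγ n).le
    have h3 : 0 ≤ ∑ n, ((∑ m, G m n ^ 2) + ρ) * γ n := by
      apply Finset.sum_nonneg; intro n _
      exact mul_nonneg (hG n).le (hγ n).le
    linarith
  have hS2bdd : BddBelow S2 := by
    refine ⟨0, ?_⟩
    rintro c ⟨X, rfl⟩
    positivity
  -- scaled cost identity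
  have hscal : ∀ (X : Matrix (Fin N) (Fin T) ℝ) (γ : Fin N → ℝ), (∀ n, 0 < γ n) →
      a * ((1 / (T * σ2)) * (∑ m, ∑ t, (Y m t - (G * X) m t) ^ 2)
            + (1 / T) * (∑ n, ∑ t, X n t ^ 2 / γ n)
            + ∑ n, ((∑ m, G m n ^ 2) + ρ) * γ n)
      = (1 / 2) * (∑ m, ∑ t, (Y m t - (G * X) m t) ^ 2)
        + (σ2 / 2) * ∑ n, ((∑ t, X n t ^ 2) / γ n
            + (T : ℝ) * ((∑ m, G m n ^ 2) + ρ) * γ n) := by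
    intro X γ hγ
    have hsum : (∑ n, ∑ t, X n t ^ 2 / γ n) = ∑ n, (∑ t, X n t ^ 2) / γ n :=
      Finset.sum_congr rfl fun n _ => (Finset.sum_div _ _ _).symm
    have e0 : ∑ n, ((∑ t, X n t ^ 2) / γ n + (T : ℝ) * ((∑ m, G m n ^ 2) + ρ) * γ n)
        = (∑ n, (∑ t, X n t ^ 2) / γ n)
          + (T : ℝ) * ∑ n, ((∑ m, G m n ^ 2) + ρ) * γ n := by
      rw [Finset.sum_add_distrib, Finset.mul_sum]
      congr 1
      exact Finset.sum_congr rfl fun n _ => by ring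
    rw [hsum, e0, ha_def]
    field_simp
    ring
  apply le_antisymm
  · -- a * sInf S1 ≤ sInf S2
    refine le_csInf hS2ne ?_
    rintro c2 ⟨X, rfl⟩
    refine le_of_forall_pos_le_add ?_
    intro ε hε
    set W : ℝ := ∑ n, ((∑ m, G m n ^ 2) + ρ) with hW_def
    have hWnn : 0 ≤ W := Finset.sum_nonneg fun n _ => (hG n).le
    set δ : ℝ := ε / (σ2 / 2 * ((T : ℝ) * W) + 1) with hδ_def
    have hden : 0 < σ2 / 2 * ((T : ℝ) * W) + 1 := by positivity
    have hδpos : 0 < δ := div_pos hε hden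
    set γ : Fin N → ℝ := fun n =>
      Real.sqrt ((∑ t, X n t ^ 2) / ((T : ℝ) * ((∑ m, G m n ^ 2) + ρ))) + δ with hγ_def
    have hγpos : ∀ n, 0 < γ n := fun n => by
      rw [hγ_def]; positivity
    have hmem : (1 / (T * σ2)) * (∑ m, ∑ t, (Y m t - (G * X) m t) ^ 2)
            + (1 / T) * (∑ n, ∑ t, X n t ^ 2 / γ n)
            + ∑ n, ((∑ m, G m n ^ 2) + ρ) * γ n ∈ S1 := ⟨X, γ, hγpos, rfl⟩
    have h1 : a * sInf S1 ≤ a * ((1 / (T * σ2)) * (∑ m, ∑ t, (Y m t - (G * X) m t) ^ 2)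
            + (1 / T) * (∑ n, ∑ t, X n t ^ 2 / γ n)
            + ∑ n, ((∑ m, G m n ^ 2) + ρ) * γ n) :=
      mul_le_mul_of_nonneg_left (csInf_le hS1bdd hmem) ha.le
    rw [hscal X γ hγpos] at h1
    have hub : ∑ n, ((∑ t, X n t ^ 2) / γ n + (T : ℝ) * ((∑ m, G m n ^ 2) + ρ) * γ n)
        ≤ ∑ n, (2 * (Real.sqrt T * Real.sqrt ((∑ m, G m n ^ 2) + ρ)
              * Real.sqrt (∑ t, X n t ^ 2))
            + (T : ℝ) * ((∑ m, G m n ^ 2) + ρ) * δ) := by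
      apply Finset.sum_le_sum
      intro n _
      exact ub_core (hG n) (by positivity) hT0 hδpos
    have hsum2 : ∑ n, (2 * (Real.sqrt T * Real.sqrt ((∑ m, G m n ^ 2) + ρ)
              * Real.sqrt (∑ t, X n t ^ 2))
            + (T : ℝ) * ((∑ m, G m n ^ 2) + ρ) * δ)
        = 2 * Real.sqrt T *
            (∑ n, Real.sqrt ((∑ m, G m n ^ 2) + ρ) * Real.sqrt (∑ t, X n t ^ 2))
          + (T : ℝ) * W * δ := by
      rw [Finset.sum_add_distrib]
      congr 1
      · rw [Finset.mul_sum]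
        exact Finset.sum_congr rfl fun n _ => by ring
      · rw [hW_def, Finset.mul_sum, Finset.sum_mul]
    have hδbound : σ2 / 2 * ((T : ℝ) * W * δ) ≤ ε := by
      have h2 : (σ2 / 2 * ((T : ℝ) * W) + 1) * δ = ε := by
        rw [hδ_def]; field_simp
      nlinarith [hδpos]
    have hub2 : (σ2 / 2) *
          ∑ n, ((∑ t, X n t ^ 2) / γ n + (T : ℝ) * ((∑ m, G m n ^ 2) + ρ) * γ n)
        ≤ (σ2 / 2) * (2 * Real.sqrt T *
            (∑ n, Real.sqrt ((∑ m, G m n ^ 2) + ρ) * Real.sqrt (∑ t, X n t ^ 2))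
          + (T : ℝ) * W * δ) :=
      mul_le_mul_of_nonneg_left (hub.trans_eq hsum2) (by positivity)
    have heq : (σ2 / 2) * (2 * Real.sqrt T *
            (∑ n, Real.sqrt ((∑ m, G m n ^ 2) + ρ) * Real.sqrt (∑ t, X n t ^ 2))
          + (T : ℝ) * W * δ)
        = σ2 * Real.sqrt T *
            (∑ n, Real.sqrt ((∑ m, G m n ^ 2) + ρ) * Real.sqrt (∑ t, X n t ^ 2))
          + σ2 / 2 * ((T : ℝ) * W * δ) := by ring
    linarith
  · -- sInf S2 ≤ a * sInf S1
    have h : sInf S2 / a ≤ sInf S1 := by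
      refine le_csInf hS1ne ?_
      rintro c1 ⟨X, γ, hγpos, rfl⟩
      rw [div_le_iff₀' ha, hscal X γ hγpos]
      have h1 : sInf S2 ≤ (1 / 2) * (∑ m, ∑ t, (Y m t - (G * X) m t) ^ 2)
            + σ2 * Real.sqrt T *
              ∑ n, Real.sqrt ((∑ m, G m n ^ 2) + ρ) * Real.sqrt (∑ t, X n t ^ 2) :=
        csInf_le hS2bdd ⟨X, rfl⟩
      have h2 : σ2 * Real.sqrt T *
            ∑ n, Real.sqrt ((∑ m, G m n ^ 2) + ρ) * Real.sqrt (∑ t, X n t ^ 2)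
          ≤ (σ2 / 2) * ∑ n, ((∑ t, X n t ^ 2) / γ n
              + (T : ℝ) * ((∑ m, G m n ^ 2) + ρ) * γ n) := by
        rw [Finset.mul_sum, Finset.mul_sum]
        apply Finset.sum_le_sum
        intro n _
        have h3 := amgm_core (hG n) (by positivity : (0:ℝ) ≤ ∑ t, X n t ^ 2) (hγpos n) hT0
        nlinarith [h3, hσ.le]
      linarith
    rwa [div_le_iff₀' ha] at h
end
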